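/- Integrated kernel bound: there exists a dimensional constant C_d such that for all x, y ∈ ℝ^d with x ≠ y, ∫_0^1 |∂_r W_r(x−y)| dr ≤ C_d |x−y|^{−d}, where W_r(z) = π^{−d/2}(1−r²)^{−d/2} exp(−|z|²/(1−r²)). -/

import Mathlib

open Real MeasureTheory

noncomputable def auxF (d : ℕ) (a c : ℝ) (s : ℝ) : ℝ :=
  c * (1 - s ^ 2) ^ (-(d : ℝ) / 2) * Real.exp (-a / (1 - s ^ 2))

noncomputable def auxF' (d : ℕ) (a c : ℝ) (s : ℝ) : ℝ :=
  2 * s * c * (1 - s ^ 2) ^ (-(d : ℝ) / 2 - 2) * Real.exp (-a / (1 - s ^ 2)) *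
    ((d : ℝ) / 2 * (1 - s ^ 2) - a)

lemma hasDerivF {d : ℕ} {a c : ℝ} {s : ℝ} (hs : s ∈ Set.Ioo (-1:ℝ) 1) :
    HasDerivAt (auxF d a c) (auxF' d a c s) s := by
  obtain ⟨hs1, hs2⟩ := hs
  have hu : (0:ℝ) < 1 - s ^ 2 := by nlinarith
  have h1 : HasDerivAt (fun s : ℝ => 1 - s ^ 2) (-(2 * s)) s := by
    simpa using ((hasDerivAt_pow 2 s).const_sub 1)
  have h2 : HasDerivAt (fun s : ℝ => (1 - s ^ 2) ^ (-(d : ℝ) / 2))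
      ((-(2 * s)) * (-(d:ℝ)/2) * (1 - s ^ 2) ^ (-(d : ℝ) / 2 - 1)) s :=
    h1.rpow_const (Or.inl hu.ne')
  have h3 : HasDerivAt (fun s : ℝ => -a / (1 - s ^ 2))
      ((0 * (1 - s^2) - (-a) * (-(2*s))) / (1 - s^2)^2) s :=
    (hasDerivAt_const s (-a)).div h1 hu.ne'
  have h4 := h3.exp
  have h5 := (h2.const_mul c).mul h4
  have e1 : (1 - s^2) ^ (-(d:ℝ)/2 - 1) = (1 - s^2) ^ (-(d:ℝ)/2 - 2) * (1 - s^2) := by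
    rw [show -(d:ℝ)/2 - 1 = (-(d:ℝ)/2 - 2) + 1 by ring, Real.rpow_add hu, Real.rpow_one]
  have e2 : (1 - s^2) ^ (-(d:ℝ)/2) = (1 - s^2) ^ (-(d:ℝ)/2 - 2) * (1 - s^2)^2 := by
    rw [show -(d:ℝ)/2 = (-(d:ℝ)/2 - 2) + 2 by ring, Real.rpow_add hu,
      ← Real.rpow_natCast (1 - s^2) 2]
    norm_num
  refine HasDerivAt.congr_deriv (f := auxF d a c) h5 ?_
  rw [auxF', e1, e2]
  field_simp
  ring

lemma auxF_one (d : ℕ) (hd : 1 ≤ d) (a c : ℝ) : auxF d a c 1 = 0 := by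
  have hdpos : (0:ℝ) < d := by exact_mod_cast hd
  have hq : -(d:ℝ)/2 ≠ 0 := by
    have : -(d:ℝ)/2 < 0 := by linarith
    exact this.ne
  simp [auxF, Real.zero_rpow hq]

lemma auxF_nonneg {d : ℕ} {a c s : ℝ} (hc : 0 ≤ c) (hu : 0 ≤ 1 - s ^ 2) :
    0 ≤ auxF d a c s :=
  mul_nonneg (mul_nonneg hc (Real.rpow_nonneg hu _)) (Real.exp_pos _).le

lemma key_pointwise (d : ℕ) {t : ℝ} (ht : 0 ≤ t) :
    t ^ ((d : ℝ)/2) * Real.exp (-t) ≤ 1 + (Nat.factorial d : ℝ) := by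
  have hfac : (1:ℝ) ≤ (Nat.factorial d : ℝ) := by
    exact_mod_cast Nat.one_le_iff_ne_zero.2 (Nat.factorial_ne_zero d)
  rcases le_total t 1 with h | h
  · have h1 : t ^ ((d:ℝ)/2) ≤ 1 := Real.rpow_le_one ht h (by positivity)
    have h2 : Real.exp (-t) ≤ 1 := by
      rw [Real.exp_le_one_iff]; linarith
    nlinarith [Real.rpow_nonneg ht ((d:ℝ)/2), (Real.exp_pos (-t)).le]
  · have h1 : t ^ ((d:ℝ)/2) ≤ t ^ (d:ℝ) := Real.rpow_le_rpow_of_exponent_le h (by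
      have : (0:ℝ) ≤ (d:ℝ) := by positivity
      linarith)
    have h2 : t ^ (d:ℝ) = t ^ d := Real.rpow_natCast t d
    have h3 : t ^ d ≤ (Nat.factorial d : ℝ) * Real.exp t := by
      have := Real.pow_div_factorial_le_exp t ht d
      have hf : (0:ℝ) < (Nat.factorial d : ℝ) := by positivity
      rw [div_le_iff₀ hf] at this
      linarith [this]
    have hE : (0:ℝ) < Real.exp (-t) := Real.exp_pos _
    calc t ^ ((d:ℝ)/2) * Real.exp (-t) ≤ t ^ (d:ℝ) * Real.exp (-t) :=
          mul_le_mul_of_nonneg_right h1 hE.le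
      _ = t ^ d * Real.exp (-t) := by rw [h2]
      _ ≤ ((Nat.factorial d : ℝ) * Real.exp t) * Real.exp (-t) :=
          mul_le_mul_of_nonneg_right h3 hE.le
      _ = (Nat.factorial d : ℝ) := by rw [mul_assoc, ← Real.exp_add]; simp
      _ ≤ 1 + (Nat.factorial d : ℝ) := by linarith

lemma auxF_le {d : ℕ} (hd : 1 ≤ d) {a c s : ℝ} (ha : 0 < a) (hc : 0 ≤ c)
    (hs : s ∈ Set.Icc (0:ℝ) 1) :
    auxF d a c s ≤ c * (1 + (Nat.factorial d : ℝ)) * a ^ (-(d : ℝ) / 2) := by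
  obtain ⟨h1, h2⟩ := hs
  have hu0 : (0:ℝ) ≤ 1 - s ^ 2 := by nlinarith
  rcases eq_or_lt_of_le hu0 with h | hu
  · have hz : auxF d a c s = 0 := by
      have hq : -(d:ℝ)/2 ≠ 0 := by
        have hdpos : (0:ℝ) < d := by exact_mod_cast hd
        have : -(d:ℝ)/2 < 0 := by linarith
        exact this.ne
      rw [auxF, ← h, Real.zero_rpow hq]; ring
    rw [hz]
    positivity
  · set u : ℝ := 1 - s ^ 2 with hudef
    set t : ℝ := a / u with htdef
    have ht : 0 < t := div_pos ha hu
    have hut : u = a / t := by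
      rw [htdef]; field_simp
    have key := key_pointwise d ht.le
    have e : u ^ (-(d:ℝ)/2) = a ^ (-(d:ℝ)/2) * t ^ ((d:ℝ)/2) := by
      rw [hut, Real.div_rpow ha.le ht.le, show -(d:ℝ)/2 = -((d:ℝ)/2) by ring,
        Real.rpow_neg ht.le, Real.rpow_neg ha.le]
      simp [div_eq_mul_inv, inv_inv]
    have eexp : -a / u = -t := by rw [htdef]; ring
    calc auxF d a c s = c * (a ^ (-(d:ℝ)/2) * t ^ ((d:ℝ)/2)) * Real.exp (-t) := by
          rw [auxF, ← hudef, ← e, eexp]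
      _ = c * a ^ (-(d:ℝ)/2) * (t ^ ((d:ℝ)/2) * Real.exp (-t)) := by ring
      _ ≤ c * a ^ (-(d:ℝ)/2) * (1 + (Nat.factorial d : ℝ)) :=
          mul_le_mul_of_nonneg_left key (by positivity)
      _ = c * (1 + (Nat.factorial d : ℝ)) * a ^ (-(d:ℝ)/2) := by ring

lemma contF {d : ℕ} (hd : 1 ≤ d) {a c : ℝ} (ha : 0 < a) (hc : 0 ≤ c) {p : ℝ} (hp : -1 < p) :
    ContinuousOn (auxF d a c) (Set.Icc p 1) := by
  intro s hs
  rcases lt_or_eq_of_le hs.2 with h | h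
  · exact ((hasDerivF (d := d) (a := a) (c := c)
      ⟨lt_of_lt_of_le hp hs.1, h⟩).continuousAt).continuousWithinAt
  · subst h
    have hF1 : auxF d a c 1 = 0 := auxF_one d hd a c
    set K : ℝ := c * (Nat.factorial (d+1) : ℝ) / a ^ (d+1) with hK
    have hbound : ∀ x ∈ Set.Icc p 1, auxF d a c x ≤ K * (1 - x ^ 2) ^ ((d:ℝ)/2 + 1) := by
      intro x hx
      obtain ⟨hx1, hx2⟩ := hx
      have hu0 : (0:ℝ) ≤ 1 - x ^ 2 := by nlinarith
      rcases eq_or_lt_of_le hu0 with h | hu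
      · have hq : -(d:ℝ)/2 ≠ 0 := by
          have hdpos : (0:ℝ) < d := by exact_mod_cast hd
          have : -(d:ℝ)/2 < 0 := by linarith
          exact this.ne
        rw [auxF, ← h, Real.zero_rpow hq, Real.zero_rpow (by positivity : (d:ℝ)/2 + 1 ≠ 0)]
        simp
      · have hN : (0:ℝ) < (Nat.factorial (d+1) : ℝ) := by positivity
        have hpow : (0:ℝ) < (a / (1 - x^2))^(d+1) := by positivity
        have hstep := Real.pow_div_factorial_le_exp (a / (1 - x^2)) (div_pos ha hu).le (d+1)
        rw [div_le_iff₀ hN] at hstep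
        have h6 : Real.exp (-a / (1 - x^2)) ≤
            (Nat.factorial (d+1) : ℝ) / (a / (1 - x^2))^(d+1) := by
          rw [neg_div, Real.exp_neg, le_div_iff₀ hpow]
          calc (Real.exp (a/(1-x^2)))⁻¹ * (a/(1-x^2))^(d+1)
              ≤ (Real.exp (a/(1-x^2)))⁻¹ * ((Nat.factorial (d+1) : ℝ) * Real.exp (a/(1-x^2))) := by
                apply mul_le_mul_of_nonneg_left _ (by positivity)
                rw [mul_comm] at hstep
                exact hstep
            _ = (Nat.factorial (d+1) : ℝ) := by
                field_simp
        have h6' : Real.exp (-a / (1 - x^2)) ≤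
            (Nat.factorial (d+1) : ℝ) * (1 - x^2)^(d+1) / a^(d+1) := by
          rw [div_pow, div_div_eq_mul_div] at h6
          exact h6
        have emerge : (1-x^2) ^ (-(d:ℝ)/2) * (1-x^2)^(d+1) = (1-x^2) ^ ((d:ℝ)/2 + 1) := by
          rw [← Real.rpow_natCast (1-x^2) (d+1), ← Real.rpow_add hu]
          congr 1
          push_cast
          ring
        calc auxF d a c x = c * (1-x^2)^(-(d:ℝ)/2) * Real.exp (-a/(1-x^2)) := rfl
          _ ≤ c * (1-x^2)^(-(d:ℝ)/2) *
              ((Nat.factorial (d+1) : ℝ) * (1-x^2)^(d+1) / a^(d+1)) :=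
              mul_le_mul_of_nonneg_left h6'
                (mul_nonneg hc (Real.rpow_nonneg hu0 _))
          _ = K * ((1-x^2)^(-(d:ℝ)/2) * (1-x^2)^(d+1)) := by rw [hK]; ring
          _ = K * (1-x^2)^((d:ℝ)/2+1) := by rw [emerge]
    have hgc : ContinuousAt (fun x : ℝ => K * (1 - x ^ 2) ^ ((d:ℝ)/2 + 1)) 1 := by
      apply ContinuousAt.mul continuousAt_const
      apply ContinuousAt.rpow_const _ (Or.inr (by positivity))
      fun_prop
    have hg1 : K * (1 - (1:ℝ) ^ 2) ^ ((d:ℝ)/2 + 1) = 0 := by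
      norm_num [Real.zero_rpow (by positivity : (d:ℝ)/2 + 1 ≠ 0)]
    have htg : Filter.Tendsto (fun x : ℝ => K * (1 - x ^ 2) ^ ((d:ℝ)/2 + 1))
        (nhdsWithin 1 (Set.Icc p 1)) (nhds 0) := by
      have h := hgc.continuousWithinAt (s := Set.Icc p 1)
      rw [ContinuousWithinAt, hg1] at h
      exact h
    rw [ContinuousWithinAt, hF1]
    refine tendsto_of_tendsto_of_tendsto_of_le_of_le' tendsto_const_nhds htg ?_ ?_
    · filter_upwards [self_mem_nhdsWithin] with x hx
      exact auxF_nonneg hc (by obtain ⟨hx1, hx2⟩ := hx; nlinarith)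
    · filter_upwards [self_mem_nhdsWithin] with x hx
      exact hbound x hx

lemma piece_neg {d : ℕ} {a c : ℝ} {p q : ℝ} (hpq : p < q) (hq : q ≤ 1) (hp : (-1:ℝ) < p)
    (hcont : ContinuousOn (auxF d a c) (Set.Icc p q))
    (hsign : ∀ s ∈ Set.Ioo p q, auxF' d a c s ≤ 0) :
    IntegrableOn (auxF' d a c) (Set.Ioo p q) ∧
      ∫ s in Set.Ioo p q, |auxF' d a c s| = auxF d a c p - auxF d a c q := by
  have hder : ∀ s ∈ Set.Ioo p q, HasDerivAt (auxF d a c) (auxF' d a c s) s := fun s hs =>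
    hasDerivF ⟨hp.trans hs.1, lt_of_lt_of_le hs.2 hq⟩
  have hderneg : ∀ s ∈ Set.Ioo p q, HasDerivAt (fun x => -auxF d a c x) (-auxF' d a c s) s :=
    fun s hs => (hder s hs).neg
  have hint0 : IntegrableOn (fun s => -auxF' d a c s) (Set.Ioc p q) :=
    intervalIntegral.integrableOn_deriv_of_nonneg hcont.neg hderneg
      (fun s hs => neg_nonneg.2 (hsign s hs))
  have hint : IntegrableOn (auxF' d a c) (Set.Ioo p q) := by
    have h2 : IntegrableOn (auxF' d a c) (Set.Ioc p q) :=
      (hint0.neg).congr (Filter.Eventually.of_forall fun s => by simp)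
    exact h2.mono_set Set.Ioo_subset_Ioc_self
  refine ⟨hint, ?_⟩
  have hftc : ∫ s in p..q, -auxF' d a c s = (-auxF d a c q) - (-auxF d a c p) :=
    intervalIntegral.integral_eq_sub_of_hasDerivAt_of_le hpq.le hcont.neg hderneg
      ((intervalIntegrable_iff_integrableOn_Ioc_of_le hpq.le).2 hint0)
  have h1 : ∫ s in Set.Ioo p q, |auxF' d a c s| = ∫ s in Set.Ioo p q, -auxF' d a c s :=
    setIntegral_congr_fun measurableSet_Ioo (fun s hs => abs_of_nonpos (hsign s hs))
  rw [h1, ← integral_Ioc_eq_integral_Ioo, ← intervalIntegral.integral_of_le hpq.le, hftc]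
  ring

lemma piece_pos {d : ℕ} {a c : ℝ} {p q : ℝ} (hpq : p < q) (hq : q ≤ 1) (hp : (-1:ℝ) < p)
    (hcont : ContinuousOn (auxF d a c) (Set.Icc p q))
    (hsign : ∀ s ∈ Set.Ioo p q, 0 ≤ auxF' d a c s) :
    IntegrableOn (auxF' d a c) (Set.Ioo p q) ∧
      ∫ s in Set.Ioo p q, |auxF' d a c s| = auxF d a c q - auxF d a c p := by
  have hder : ∀ s ∈ Set.Ioo p q, HasDerivAt (auxF d a c) (auxF' d a c s) s := fun s hs =>
    hasDerivF ⟨hp.trans hs.1, lt_of_lt_of_le hs.2 hq⟩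
  have hint0 : IntegrableOn (auxF' d a c) (Set.Ioc p q) :=
    intervalIntegral.integrableOn_deriv_of_nonneg hcont hder hsign
  have hint : IntegrableOn (auxF' d a c) (Set.Ioo p q) :=
    hint0.mono_set Set.Ioo_subset_Ioc_self
  refine ⟨hint, ?_⟩
  have hftc : ∫ s in p..q, auxF' d a c s = auxF d a c q - auxF d a c p :=
    intervalIntegral.integral_eq_sub_of_hasDerivAt_of_le hpq.le hcont hder
      ((intervalIntegrable_iff_integrableOn_Ioc_of_le hpq.le).2 hint0)
  have h1 : ∫ s in Set.Ioo p q, |auxF' d a c s| = ∫ s in Set.Ioo p q, auxF' d a c s :=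
    setIntegral_congr_fun measurableSet_Ioo (fun s hs => abs_of_nonneg (hsign s hs))
  rw [h1, ← integral_Ioc_eq_integral_Ioo, ← intervalIntegral.integral_of_le hpq.le, hftc]

set_option maxHeartbeats 1000000 in
/-- Integrated kernel bound: `∫_0^1 |∂_r W_r(x−y)| dr ≤ C_d |x−y|^{−d}` for `x ≠ y`,
where `W_r(z) = π^{−d/2}(1−r²)^{−d/2} exp(−|z|²/(1−r²))`. -/
theorem stmt_9 (d : ℕ) (hd : 1 ≤ d) :
    ∃ C : ℝ, 0 < C ∧ ∀ x y : EuclideanSpace ℝ (Fin d), x ≠ y →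
      ∫ r in Set.Ioo (0 : ℝ) 1,
        |deriv (fun s : ℝ => Real.pi ^ (-(d : ℝ) / 2) *
          (1 - s ^ 2) ^ (-(d : ℝ) / 2) *
          Real.exp (-‖x - y‖ ^ 2 / (1 - s ^ 2))) r|
        ≤ C * ‖x - y‖ ^ (-(d : ℝ)) := by
  refine ⟨2 * Real.pi ^ (-(d : ℝ) / 2) * (1 + (Nat.factorial d : ℝ)),
    by positivity, ?_⟩
  intro x y hxy
  have hnorm : 0 < ‖x - y‖ := norm_pos_iff.2 (sub_ne_zero.2 hxy)
  show (∫ r in Set.Ioo (0:ℝ) 1,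
      |deriv (auxF d (‖x - y‖ ^ 2) (Real.pi ^ (-(d : ℝ) / 2))) r|)
      ≤ 2 * Real.pi ^ (-(d : ℝ) / 2) * (1 + (Nat.factorial d : ℝ)) * ‖x - y‖ ^ (-(d : ℝ))
  set c : ℝ := Real.pi ^ (-(d : ℝ) / 2) with hcdef
  set a : ℝ := ‖x - y‖ ^ 2 with hadef
  have hc : 0 < c := by rw [hcdef]; positivity
  have ha : 0 < a := by rw [hadef]; exact pow_pos hnorm 2
  have hdpos : (0:ℝ) < d := by exact_mod_cast hd
  have hcongr : (∫ r in Set.Ioo (0:ℝ) 1, |deriv (auxF d a c) r|)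
      = ∫ r in Set.Ioo (0:ℝ) 1, |auxF' d a c r| := by
    apply setIntegral_congr_fun measurableSet_Ioo
    intro r hr
    obtain ⟨hr1, hr2⟩ := hr
    show |deriv (auxF d a c) r| = |auxF' d a c r|
    rw [(hasDerivF (d := d) (a := a) (c := c) ⟨by linarith, hr2⟩).deriv]
  have key : ∫ r in Set.Ioo (0:ℝ) 1, |auxF' d a c r| ≤
      2 * (c * (1 + (Nat.factorial d : ℝ)) * a ^ (-(d:ℝ)/2)) := by
    have hBpos : 0 < c * (1 + (Nat.factorial d : ℝ)) * a ^ (-(d:ℝ)/2) := by positivity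
    by_cases hcase : (d:ℝ) ≤ 2 * a
    · -- one decreasing piece on (0,1)
      have hsign : ∀ s ∈ Set.Ioo (0:ℝ) 1, auxF' d a c s ≤ 0 := by
        intro s hs
        obtain ⟨h1, h2⟩ := hs
        have hu : 0 < 1 - s^2 := by nlinarith
        have hfac : (d:ℝ)/2 * (1 - s^2) - a ≤ 0 := by
          nlinarith [mul_nonneg (le_of_lt hdpos) (sq_nonneg s)]
        have hpos : 0 ≤ 2 * s * c * (1 - s^2) ^ (-(d:ℝ)/2 - 2) * Real.exp (-a / (1 - s^2)) :=
          mul_nonneg (mul_nonneg (mul_nonneg (by linarith) hc.le)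
            (Real.rpow_nonneg hu.le _)) (Real.exp_pos _).le
        unfold auxF'
        exact mul_nonpos_iff.2 (Or.inl ⟨hpos, hfac⟩)
      have hcont := contF hd ha hc.le (p := (0:ℝ)) (by norm_num)
      obtain ⟨hint, heq⟩ := piece_neg (by norm_num : (0:ℝ) < 1) le_rfl (by norm_num) hcont hsign
      rw [heq, auxF_one d hd a c, sub_zero]
      have hle := auxF_le hd ha hc.le (Set.mem_Icc.2 ⟨le_rfl, zero_le_one⟩) (s := 0)
      linarith
    · push_neg at hcase
      set r0 := Real.sqrt (1 - 2*a/(d:ℝ)) with hr0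
      have harg : 0 < 1 - 2*a/(d:ℝ) := by
        rw [sub_pos, div_lt_one hdpos]; linarith
      have hr0pos : 0 < r0 := Real.sqrt_pos.2 harg
      have hr0sq : r0^2 = 1 - 2*a/(d:ℝ) := Real.sq_sqrt harg.le
      have hda : 0 < 2*a/(d:ℝ) := by positivity
      have hr0lt : r0 < 1 := by nlinarith
      have husq : 1 - r0^2 = 2*a/(d:ℝ) := by rw [hr0sq]; ring
      have hsign1 : ∀ s ∈ Set.Ioo (0:ℝ) r0, 0 ≤ auxF' d a c s := by
        intro s hs
        obtain ⟨h1, h2⟩ := hs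
        have hs2 : s^2 < r0^2 := by nlinarith
        have hu : 0 < 1 - s^2 := by nlinarith
        have hlt : 2*a/(d:ℝ) < 1 - s^2 := by rw [← husq]; nlinarith
        have hlt' : 2*a < (1 - s^2) * (d:ℝ) := (div_lt_iff₀ hdpos).1 hlt
        have hfac : 0 ≤ (d:ℝ)/2 * (1 - s^2) - a := by nlinarith
        have hpos : 0 ≤ 2 * s * c * (1 - s^2) ^ (-(d:ℝ)/2 - 2) * Real.exp (-a / (1 - s^2)) :=
          mul_nonneg (mul_nonneg (mul_nonneg (by linarith) hc.le)
            (Real.rpow_nonneg hu.le _)) (Real.exp_pos _).le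
        unfold auxF'
        exact mul_nonneg hpos hfac
      have hsign2 : ∀ s ∈ Set.Ioo r0 1, auxF' d a c s ≤ 0 := by
        intro s hs
        obtain ⟨h1, h2⟩ := hs
        have hs2 : r0^2 < s^2 := by nlinarith
        have hu : 0 < 1 - s^2 := by nlinarith
        have hlt : 1 - s^2 < 2*a/(d:ℝ) := by rw [← husq]; nlinarith
        have hlt' : (1 - s^2) * (d:ℝ) < 2*a := (lt_div_iff₀ hdpos).1 hlt
        have hfac : (d:ℝ)/2 * (1 - s^2) - a ≤ 0 := by nlinarith
        have hpos : 0 ≤ 2 * s * c * (1 - s^2) ^ (-(d:ℝ)/2 - 2) * Real.exp (-a / (1 - s^2)) :=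
          mul_nonneg (mul_nonneg (mul_nonneg (by linarith) hc.le)
            (Real.rpow_nonneg hu.le _)) (Real.exp_pos _).le
        unfold auxF'
        exact mul_nonpos_iff.2 (Or.inl ⟨hpos, hfac⟩)
      have hcont1 : ContinuousOn (auxF d a c) (Set.Icc 0 r0) := fun s hs =>
        ((hasDerivF (d := d) (a := a) (c := c)
          ⟨by linarith [hs.1], lt_of_le_of_lt hs.2 hr0lt⟩).continuousAt).continuousWithinAt
      have hcont2 := contF hd ha hc.le (p := r0) (by linarith)
      obtain ⟨hint1, heq1⟩ := piece_pos hr0pos hr0lt.le (by norm_num) hcont1 hsign1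
      obtain ⟨hint2, heq2⟩ := piece_neg hr0lt le_rfl (by linarith) hcont2 hsign2
      have hsplit : Set.Ioo (0:ℝ) 1 = Set.Ioo 0 r0 ∪ Set.Ico r0 1 :=
        (Set.Ioo_union_Ico_eq_Ioo hr0pos hr0lt.le).symm
      have hdisj : Disjoint (Set.Ioo (0:ℝ) r0) (Set.Ico r0 1) := by
        apply Set.disjoint_left.2
        intro z hz hz'
        exact absurd hz.2 (not_lt.2 hz'.1)
      have hintIco : IntegrableOn (fun s => |auxF' d a c s|) (Set.Ico r0 1) := by
        rw [integrableOn_Ico_iff_integrableOn_Ioo]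
        exact hint2.abs
      rw [hsplit, setIntegral_union hdisj measurableSet_Ico hint1.abs hintIco,
        integral_Ico_eq_integral_Ioo, heq1, heq2, auxF_one d hd a c]
      have hFr0 := auxF_le hd ha hc.le (Set.mem_Icc.2 ⟨hr0pos.le, hr0lt.le⟩) (s := r0)
      have hF0 : 0 ≤ auxF d a c 0 := auxF_nonneg hc.le (by norm_num)
      linarith
  have hpow : a ^ (-(d:ℝ)/2) = ‖x - y‖ ^ (-(d:ℝ)) := by
    rw [hadef, ← Real.rpow_natCast ‖x - y‖ 2, ← Real.rpow_mul (norm_nonneg _)]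
    congr 1
    push_cast
    ring
  calc (∫ r in Set.Ioo (0:ℝ) 1, |deriv (auxF d a c) r|)
      = ∫ r in Set.Ioo (0:ℝ) 1, |auxF' d a c r| := hcongr
    _ ≤ 2 * (c * (1 + (Nat.factorial d : ℝ)) * a ^ (-(d:ℝ)/2)) := key
    _ = 2 * c * (1 + (Nat.factorial d : ℝ)) * ‖x - y‖ ^ (-(d:ℝ)) := by rw [hpow]; ring
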